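/- Let ν > 2, ω₁ = ½√(ν²-4), q₀, s₀ ∈ ℝ, A₂₁ = (νs₀+2q₀)/√(ν²-4), A₂₂ = (νq₀+2s₀)/√(ν²-4), F(t) = 1 - s₀ + (A₂₁ sinh ω₁t + s₀ cosh ω₁t)e^{-νt/2}, G(t) = (-A₂₂ sinh ω₁t + q₀ cosh ω₁t)e^{-νt/2}. Then F(0) = 1, G(0) = q₀, and wherever F ≠ 0, q = G/F with s = -q' - q² - νq solves q' = -s - q² - νq, s' = q - qs with the given initial data. -/

import Mathlib

/-- Explicit solution of the derivative system q' = -s - q² - νq, s' = q - qs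
in the overdamped case ν > 2, via linearization. -/
theorem qs_solution_overdamped (ν : ℝ) (hν : 2 < ν) (q₀ s₀ : ℝ)
    (ω₁ : ℝ) (hω : ω₁ = (1/2) * Real.sqrt (ν ^ 2 - 4))
    (A₂₁ A₂₂ : ℝ)
    (hA21 : A₂₁ = (ν * s₀ + 2 * q₀) / Real.sqrt (ν ^ 2 - 4))
    (hA22 : A₂₂ = (ν * q₀ + 2 * s₀) / Real.sqrt (ν ^ 2 - 4))
    (F G : ℝ → ℝ)
    (hF : F = fun t => 1 - s₀ + (A₂₁ * Real.sinh (ω₁ * t) + s₀ * Real.cosh (ω₁ * t)) * Real.exp (-(ν * t) / 2))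
    (hG : G = fun t => (-A₂₂ * Real.sinh (ω₁ * t) + q₀ * Real.cosh (ω₁ * t)) * Real.exp (-(ν * t) / 2))
    (q s : ℝ → ℝ)
    (hq : q = fun t => G t / F t)
    (hs : s = fun t => -deriv q t - q t ^ 2 - ν * q t) :
    F 0 = 1 ∧ G 0 = q₀ ∧
    (∀ t : ℝ, F t ≠ 0 →
      HasDerivAt q (-s t - q t ^ 2 - ν * q t) t ∧ HasDerivAt s (q t - q t * s t) t) ∧
      q 0 = q₀ ∧ s 0 = s₀ := by
  have hν4 : (0:ℝ) < ν ^ 2 - 4 := by nlinarith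
  have hr0 : 0 < Real.sqrt (ν ^ 2 - 4) := Real.sqrt_pos.mpr hν4
  set r := Real.sqrt (ν ^ 2 - 4) with hrdef
  have hr : r ^ 2 = ν ^ 2 - 4 := Real.sq_sqrt hν4.le
  have hrne : r ≠ 0 := ne_of_gt hr0
  -- scalar identities
  have eF1 : A₂₁ * ω₁ - ν * s₀ / 2 = q₀ := by
    rw [hω, hA21]; field_simp; ring
  have eF2 : s₀ * ω₁ - ν * A₂₁ / 2 = -A₂₂ := by
    rw [hω, hA21, hA22]; field_simp; linear_combination s₀ * hr
  have eG1 : -A₂₂ * ω₁ - ν * q₀ / 2 = -ν * q₀ - s₀ := by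
    rw [hω, hA22]; field_simp; ring
  have eG2 : q₀ * ω₁ - ν * A₂₂ / 2 = -A₂₁ := by
    rw [hω, hA21, hA22]; field_simp; linear_combination q₀ * hr
  -- helper derivatives
  have hin : ∀ t : ℝ, HasDerivAt (fun t : ℝ => ω₁ * t) ω₁ t := fun t => by
    simpa using (hasDerivAt_id t).const_mul ω₁
  have hex : ∀ t : ℝ, HasDerivAt (fun t : ℝ => Real.exp (-(ν * t) / 2))
      (Real.exp (-(ν * t) / 2) * (-ν / 2)) t := fun t => by
    have h1 : HasDerivAt (fun t : ℝ => -(ν * t) / 2) (-ν / 2) t := by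
      simpa [neg_div, neg_mul] using (((hasDerivAt_id t).const_mul ν).neg.div_const 2)
    exact (Real.hasDerivAt_exp _).comp t h1
  have hsh : ∀ t : ℝ, HasDerivAt (fun t : ℝ => Real.sinh (ω₁ * t))
      (Real.cosh (ω₁ * t) * ω₁) t := fun t => (Real.hasDerivAt_sinh _).comp t (hin t)
  have hch : ∀ t : ℝ, HasDerivAt (fun t : ℝ => Real.cosh (ω₁ * t))
      (Real.sinh (ω₁ * t) * ω₁) t := fun t => (Real.hasDerivAt_cosh _).comp t (hin t)
  have hF' : ∀ t : ℝ, HasDerivAt F (G t) t := by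
    intro t
    rw [hF, hG]
    have h : HasDerivAt (fun t => 1 - s₀ + (A₂₁ * Real.sinh (ω₁ * t) + s₀ * Real.cosh (ω₁ * t)) * Real.exp (-(ν * t) / 2))
        ((A₂₁ * (Real.cosh (ω₁ * t) * ω₁) + s₀ * (Real.sinh (ω₁ * t) * ω₁)) * Real.exp (-(ν * t) / 2)
          + (A₂₁ * Real.sinh (ω₁ * t) + s₀ * Real.cosh (ω₁ * t)) * (Real.exp (-(ν * t) / 2) * (-ν / 2))) t :=
      ((((hsh t).const_mul A₂₁).add ((hch t).const_mul s₀)).mul (hex t)).const_add (1 - s₀)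
    convert h using 1
    linear_combination (-(Real.cosh (ω₁*t) * Real.exp (-(ν*t)/2))) * eF1
      - (Real.sinh (ω₁*t) * Real.exp (-(ν*t)/2)) * eF2
  have hG' : ∀ t : ℝ, HasDerivAt G (-ν * G t - F t + (1 - s₀)) t := by
    intro t
    have h : HasDerivAt (fun t => (-A₂₂ * Real.sinh (ω₁ * t) + q₀ * Real.cosh (ω₁ * t)) * Real.exp (-(ν * t) / 2))
        ((-A₂₂ * (Real.cosh (ω₁ * t) * ω₁) + q₀ * (Real.sinh (ω₁ * t) * ω₁)) * Real.exp (-(ν * t) / 2)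
          + (-A₂₂ * Real.sinh (ω₁ * t) + q₀ * Real.cosh (ω₁ * t)) * (Real.exp (-(ν * t) / 2) * (-ν / 2))) t :=
      (((hsh t).const_mul (-A₂₂)).add ((hch t).const_mul q₀)).mul (hex t)
    rw [← hG] at h
    convert h using 1
    rw [hF, hG]
    simp only
    linear_combination (-(Real.cosh (ω₁*t) * Real.exp (-(ν*t)/2))) * eG1
      - (Real.sinh (ω₁*t) * Real.exp (-(ν*t)/2)) * eG2
  -- pointwise formula for s where F ≠ 0
  have hsF : ∀ x : ℝ, F x ≠ 0 → s x = 1 - (1 - s₀) / F x := by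
    intro x hx
    have hQ : HasDerivAt q (((-ν * G x - F x + (1 - s₀)) * F x - G x * G x) / F x ^ 2) x := by
      rw [hq]; exact (hG' x).div (hF' x) hx
    rw [hs]; simp only
    rw [hQ.deriv, hq]; simp only
    field_simp
    ring
  have hF0 : F 0 = 1 := by rw [hF]; simp
  have hG0 : G 0 = q₀ := by rw [hG]; simp
  refine ⟨hF0, hG0, ?_, ?_, ?_⟩
  · intro t hFt
    have hQ : HasDerivAt q (((-ν * G t - F t + (1 - s₀)) * F t - G t * G t) / F t ^ 2) t := by
      rw [hq]; exact (hG' t).div (hF' t) hFt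
    constructor
    · convert hQ using 1
      rw [hsF t hFt, hq]; simp only
      field_simp
      ring
    · have hφ : HasDerivAt (fun x => 1 - (1 - s₀) / F x) ((1 - s₀) * G t / F t ^ 2) t := by
        have h1 : HasDerivAt (fun x => (1 - s₀) / F x) ((0 * F t - (1 - s₀) * G t) / F t ^ 2) t :=
          (hasDerivAt_const t (1 - s₀)).div (hF' t) hFt
        have h2 := h1.const_sub 1
        refine h2.congr_deriv ?_
        ring
      have hev : s =ᶠ[nhds t] fun x => 1 - (1 - s₀) / F x := by
        have hcont : ContinuousAt F t := (hF' t).continuousAt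
        filter_upwards [hcont.eventually_ne hFt] with x hx
        exact hsF x hx
      have := hφ.congr_of_eventuallyEq hev
      refine this.congr_deriv ?_
      rw [hsF t hFt, hq]; simp only
      field_simp
      ring
  · rw [hq]; simp only [hF0, hG0]; simp
  · rw [hsF 0 (by rw [hF0]; norm_num), hF0]; ring
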